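/- For $t \geq 1$, let $\pi$ be an overpartition in $\overline{\mathcal{B}}_0(\alpha_1,\ldots,\alpha_\lambda;\eta,k,r)$ such that the smallest overlined part of $\pi$ divisible by $\eta$ is greater than $\overline{t\eta}$ (or no such part exists), and such that the smallest part starting a $(k-1)$-band $g(\pi)$ satisfies $t\eta \leq g(\pi) < \overline{(t+1)\eta}$. Then the non-overlined part $t\eta$ occurs in $\pi$. -/

import Mathlib

/-- A part of an overpartition: a size together with a flag telling
whether the part is overlined. -/
structure OPart where
  size : ℕ
  overlined : Bool
deriving DecidableEq

/-- The value of a part in the ordering `1̄ < 1 < 2̄ < 2 < ⋯`: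
an overlined part of size `t` has value `2t - 1`, a non-overlined one `2t`. -/
def OPart.val (p : OPart) : ℕ := 2 * p.size - (if p.overlined then 1 else 0)

def dpart : OPart := ⟨0, false⟩

/-- value of the `i`-th part (0-based). -/
def pval (π : List OPart) (i : ℕ) : ℕ := (π.getD i dpart).val

def pover (π : List OPart) (i : ℕ) : Bool := (π.getD i dpart).overlined

def psize (π : List OPart) (i : ℕ) : ℕ := (π.getD i dpart).size

/-- the weight `|π|`: the sum of the sizes of the parts. -/
def wt (π : List OPart) : ℕ := (π.map OPart.size).sum

/-- An overpartition: a sequence of positive parts, non-increasing in the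
ordering `1̄ < 1 < 2̄ < 2 < ⋯`, in which each size is overlined at most once
(the overlined copy, being smallest among equal sizes, is the last occurrence). -/
def IsOverPartition (π : List OPart) : Prop :=
  List.Pairwise (fun p q : OPart => q.val ≤ p.val) π ∧
  (∀ p ∈ π, 0 < p.size) ∧
  (∀ t : ℕ, π.count (⟨t, true⟩ : OPart) ≤ 1)

/-- `{π_{i+l}}_{0 ≤ l ≤ m-1}` is an `m`-band of `π`:
`π_i ≤ π_{i+m-1} + η`, with strict inequality if `π_i` is overlined. -/
def IsBand (η : ℕ) (π : List OPart) (m i : ℕ) : Prop :=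
  i + m ≤ π.length ∧
  pval π i ≤ pval π (i + m - 1) + 2 * η ∧
  (pover π i = true → pval π i < pval π (i + m - 1) + 2 * η)

/-- `V̄_π(N)`: the number of overlined parts of value at most `N`
whose size is not divisible by `η`. -/
def Vbar (η : ℕ) (π : List OPart) (N : ℕ) : ℕ :=
  π.countP (fun p => p.overlined && decide (p.val ≤ N) && !(decide (p.size % η = 0)))

/-- `Ō_π(N)`: the number of overlined parts of value at least `N`
whose size is divisible by `η`. -/
def Obar (η : ℕ) (π : List OPart) (N : ℕ) : ℕ :=
  π.countP (fun p => p.overlined && decide (N ≤ p.val) && decide (p.size % η = 0))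

/-- `f_{≤η}(π)`: the number of parts not exceeding `η`. -/
def fLe (η : ℕ) (π : List OPart) : ℕ :=
  π.countP (fun p => decide (p.val ≤ 2 * η))

/-- `[|π_i|/η] + ⋯ + [|π_{i+m-1}|/η]`. -/
def bandSum (η : ℕ) (π : List OPart) (i m : ℕ) : ℕ :=
  ∑ l ∈ Finset.range m, psize π (i + l) / η

/-- Every part is congruent to `0, α_1, …, α_λ` modulo `η`. -/
def CongParts (α : ℕ → ℕ) (lam η : ℕ) (π : List OPart) : Prop :=
  ∀ p ∈ π, p.size % η = 0 ∨ ∃ s, 1 ≤ s ∧ s ≤ lam ∧ p.size % η = α s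

/-- The class `B̄(α_1,…,α_λ; η, k, r)`: conditions (1)–(4) of the definition
of `B̄₀`. -/
def InBbar (α : ℕ → ℕ) (lam η k r : ℕ) (π : List OPart) : Prop :=
  IsOverPartition π ∧
  CongParts α lam η π ∧
  (∀ p ∈ π, p.overlined = false → η ∣ p.size) ∧
  (∀ i, i + k ≤ π.length →
    pval π (i + k - 1) + 2 * η ≤ pval π i ∧
    (pover π i = false → pval π (i + k - 1) + 2 * η < pval π i)) ∧
  fLe η π ≤ r

/-- An `m`-band at `i` is even:
`[|π_i|/η]+⋯+[|π_{i+m-1}|/η] ≡ r - 1 + V̄_π(π_i) + Ō_π(π_{i+m-1}) (mod 2)`. -/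
def EvenBand (η r : ℕ) (π : List OPart) (m i : ℕ) : Prop :=
  Int.ModEq 2 (bandSum η π i m)
    ((r : ℤ) - 1 + (Vbar η π (pval π i) : ℤ) + (Obar η π (pval π (i + m - 1)) : ℤ))

/-- Condition (5) of the definition of `B̄₀`. -/
def Cond5 (η k r : ℕ) (π : List OPart) : Prop :=
  fLe η π = r → (⟨η, true⟩ : OPart) ∉ π →
    ∃ i, IsBand η π (k - 1) i ∧ pval π i < 2 * (2 * η) - 1

/-- The class `B̄₀(α_1,…,α_λ; η, k, r)`: conditions (1)–(6). -/
def InB0 (α : ℕ → ℕ) (lam η k r : ℕ) (π : List OPart) : Prop :=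
  InBbar α lam η k r π ∧ Cond5 η k r π ∧
  ∀ i, IsBand η π (k - 1) i → EvenBand η r π (k - 1) i

/-- `s(π) > t̄η`: every overlined part divisible by `η` has size `> tη`. -/
def SGt (η t : ℕ) (π : List OPart) : Prop :=
  ∀ p ∈ π, p.overlined = true → η ∣ p.size → t * η < p.size

/-- `s(π) = t̄η`. -/
def SEq (η t : ℕ) (π : List OPart) : Prop :=
  (⟨t * η, true⟩ : OPart) ∈ π ∧
  ∀ p ∈ π, p.overlined = true → η ∣ p.size → t * η ≤ p.size

/-- `g(π) ≥ x` (value `x`): every part starting a `(k-1)`-band has value `≥ x`. -/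
def GGe (η k : ℕ) (π : List OPart) (x : ℕ) : Prop :=
  ∀ i, IsBand η π (k - 1) i → x ≤ pval π i

/-- `g(π) < x`: some part starting a `(k-1)`-band has value `< x`. -/
def GLt (η k : ℕ) (π : List OPart) (x : ℕ) : Prop :=
  ∃ i, IsBand η π (k - 1) i ∧ pval π i < x

/-- `π ∈ B̄₀^=(α_1,…,α_λ; η,k,r | t)`. -/
def InBeq (α : ℕ → ℕ) (lam η k r t : ℕ) (π : List OPart) : Prop :=
  InB0 α lam η k r π ∧
  ((SEq η t π ∧ GGe η k π (2 * (t * η) - 1)) ∨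
   (SGt η t π ∧ GGe η k π (2 * (t * η)) ∧ GLt η k π (2 * ((t + 1) * η) - 1)))

/-- `π ∈ B̄₀^>(α_1,…,α_λ; η,k,r | t)`. -/
def InBgt (α : ℕ → ℕ) (lam η k r t : ℕ) (π : List OPart) : Prop :=
  InB0 α lam η k r π ∧ SGt η t π ∧ GGe η k π (2 * ((t + 1) * η) - 1)

/-- An `m`-band belonging to the closed interval `[(t-1)η, (t+1)η]`. -/
def BandInC (η t : ℕ) (π : List OPart) (m i : ℕ) : Prop :=
  IsBand η π m i ∧ 2 * ((t - 1) * η) ≤ pval π (i + m - 1) ∧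
  pval π i ≤ 2 * ((t + 1) * η)

/-- An `m`-band belonging to `[(t-1)η, \overline{(t+1)η})`. -/
def BandInO (η t : ℕ) (π : List OPart) (m i : ℕ) : Prop :=
  IsBand η π m i ∧ 2 * ((t - 1) * η) ≤ pval π (i + m - 1) ∧
  pval π i < 2 * ((t + 1) * η) - 1

/-- An `m`-band at `i` is of type N. -/
def TypeN (η r t : ℕ) (π : List OPart) (m i : ℕ) : Prop :=
  Int.ModEq 2 (bandSum η π i m)
    ((t : ℤ) + (r : ℤ) - 1 + (Vbar η π (pval π i) : ℤ) +
      (Obar η π (pval π (i + m - 1)) : ℤ))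

/-- `π` is obtained from `μ` by inserting the part `p`. -/
def InsertPart (μ : List OPart) (p : OPart) (π : List OPart) : Prop :=
  ∃ l1 l2, μ = l1 ++ l2 ∧ π = l1 ++ p :: l2

/-- The `(k-1)`-reduction `D_t` as a relation: `μ = D_t(π)`. -/
def DtRel (η t : ℕ) (π μ : List OPart) : Prop :=
  ((⟨t * η, true⟩ : OPart) ∈ π ∧ InsertPart μ ⟨t * η, true⟩ π) ∨
  ((⟨t * η, true⟩ : OPart) ∉ π ∧ InsertPart μ ⟨t * η, false⟩ π)

/-- `μ` has a `(k-2)`-band belonging to `[(t-1)η, \overline{(t+1)η})` of type N. -/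
def HasTypeNBand (η r k t : ℕ) (μ : List OPart) : Prop :=
  ∃ i, BandInO η t μ (k - 2) i ∧ TypeN η r t μ (k - 2) i

/-- The `(k-1)`-augmentation `C_t` as a relation: `π = C_t(μ)`. -/
def CtRel (η r k t : ℕ) (μ π : List OPart) : Prop :=
  (HasTypeNBand η r k t μ ∧ InsertPart μ ⟨t * η, false⟩ π) ∨
  (¬ HasTypeNBand η r k t μ ∧ InsertPart μ ⟨t * η, true⟩ π)

/-- `B₁`-type overpartitions: conditions (1)–(4), no overlined part divisible
by `η`, and at most `r - 1` parts not exceeding `η`. -/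
def InB1over (α : ℕ → ℕ) (lam η k r : ℕ) (π : List OPart) : Prop :=
  InBbar α lam η k r π ∧ (∀ p ∈ π, p.overlined = true → ¬ η ∣ p.size) ∧ fLe η π < r

/-- `D_η`: partitions into distinct parts divisible by `η`. -/
def InD (η : ℕ) (τ : List ℕ) : Prop :=
  List.Pairwise (· > ·) τ ∧ ∀ x ∈ τ, 0 < x ∧ η ∣ x

/-- Bressoud's class `B₁(α_1,…,α_λ; η,k,r)` of ordinary partitions. -/
def InB1nat (α : ℕ → ℕ) (lam η k r : ℕ) (σ : List ℕ) : Prop :=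
  List.Pairwise (· ≥ ·) σ ∧ (∀ x ∈ σ, 0 < x) ∧
  (∀ x ∈ σ, x % η = 0 ∨ ∃ s, 1 ≤ s ∧ s ≤ lam ∧ x % η = α s) ∧
  (∀ x : ℕ, ¬ η ∣ x → σ.count x ≤ 1) ∧
  (∀ i, i + k ≤ σ.length →
    σ.getD (i + k - 1) 0 + η ≤ σ.getD i 0 ∧
    (η ∣ σ.getD i 0 → σ.getD (i + k - 1) 0 + η < σ.getD i 0)) ∧
  σ.countP (fun x => decide (x ≤ η)) < r

/-- The class `Ā₀(α_1,…,α_λ; η,k,r)`. Congruence conditions involving `η/2`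
are stated with sizes doubled. -/
def InA0 (α : ℕ → ℕ) (lam η k r : ℕ) (π : List OPart) : Prop :=
  IsOverPartition π ∧
  CongParts α lam η π ∧
  (Even lam →
    ∀ p ∈ π, p.overlined = false →
      η ∣ p.size ∧
      ¬ (2 * η * (2 * k - lam - 1) ∣ 2 * p.size) ∧
      2 * p.size % (2 * η * (2 * k - lam - 1)) ≠ η * (2 * r - lam) ∧
      2 * p.size % (2 * η * (2 * k - lam - 1)) ≠
        2 * η * (2 * k - lam - 1) - η * (2 * r - lam)) ∧
  (¬ Even lam →
    (∀ p ∈ π, p.overlined = false →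
      η ∣ 2 * p.size ∧
      p.size % (2 * η) ≠ η ∧
      ¬ (2 * η * (2 * k - lam - 1) ∣ 2 * p.size) ∧
      2 * p.size % (2 * η * (2 * k - lam - 1)) ≠ η * (2 * r - lam) ∧
      2 * p.size % (2 * η * (2 * k - lam - 1)) ≠
        2 * η * (2 * k - lam - 1) - η * (2 * r - lam)) ∧
    (∀ p ∈ π, p.overlined = true → 2 * p.size % (2 * η) ≠ η))


lemma opart_eq' (p : OPart) (s : ℕ) (o : Bool) (h1 : p.size = s) (h2 : p.overlined = o) :
    p = ⟨s, o⟩ := by cases p; simp_all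

lemma two_le_count_of_two_indices' {β : Type*} [DecidableEq β] (L : List β) (n m : ℕ)
    (hnm : n < m) (hm : m < L.length) (a : β)
    (h1 : L[n]'(lt_trans hnm hm) = a) (h2 : L[m]'hm = a) : 2 ≤ L.count a := by
  obtain ⟨j, rfl⟩ : ∃ j, m = (n + 1) + j := ⟨m - (n + 1), by omega⟩
  have ha1 : a ∈ L.take (n + 1) := by
    refine List.mem_iff_getElem.mpr ⟨n, by simp [List.length_take]; omega, ?_⟩
    rw [List.getElem_take]
    exact h1
  have ha2 : a ∈ L.drop (n + 1) := by
    refine List.mem_iff_getElem.mpr ⟨j, by simp [List.length_drop]; omega, ?_⟩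
    rw [List.getElem_drop]
    exact h2
  have hc : (L.take (n + 1) ++ L.drop (n + 1)).count a =
      (L.take (n + 1)).count a + (L.drop (n + 1)).count a := by rw [List.count_append]
  rw [List.take_append_drop] at hc
  have c1 : 1 ≤ (L.take (n + 1)).count a := List.one_le_count_iff.mpr ha1
  have c2 : 1 ≤ (L.drop (n + 1)).count a := List.one_le_count_iff.mpr ha2
  omega

theorem stmt_6 (α : ℕ → ℕ) (lam η k r : ℕ)
    (hη : 0 < η)
    (hαpos : ∀ i, 1 ≤ i → i ≤ lam → 0 < α i ∧ α i < η)
    (hαmono : ∀ i j, 1 ≤ i → i < j → j ≤ lam → α i < α j)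
    (hαsym : ∀ i, 1 ≤ i → i ≤ lam → α i = η - α (lam + 1 - i))
    (hrk : r < k) (hlr : lam ≤ r) (hlk : lam + 1 < k)
    (t : ℕ) (ht : 1 ≤ t) (π : List OPart) (hπ : InB0 α lam η k r π)
    (hs : SGt η t π) (hg1 : GGe η k π (2 * (t * η)))
    (hg2 : GLt η k π (2 * ((t + 1) * η) - 1)) :
    (⟨t * η, false⟩ : OPart) ∈ π := by
  classical
  obtain ⟨⟨⟨hsort, hpos, hcount⟩, hcong, hoverd, hdiff, hfle⟩, _hc5, _hc6⟩ := hπ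
  obtain ⟨i, ⟨hlen, hb1, hb2⟩, hvlt⟩ := hg2
  have hvge : 2 * (t * η) ≤ pval π i := hg1 i ⟨hlen, hb1, hb2⟩
  have hA : (t + 1) * η = t * η + η := by ring
  have hk2 : 2 ≤ k := by omega
  have hilen : i < π.length := by omega
  set e : ℕ := i + (k - 1) - 1 with he
  have helen : e < π.length := by omega
  have hie : i ≤ e := by omega
  have hmono : ∀ n m : ℕ, n ≤ m → m < π.length → pval π m ≤ pval π n := by
    intro n m hnm hm
    rcases Nat.eq_or_lt_of_le hnm with rfl | h
    · exact le_refl _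
    · have hr := List.pairwise_iff_getElem.mp hsort n m (by omega) hm h
      unfold pval
      rw [List.getD_eq_getElem _ _ (show n < π.length by omega),
        List.getD_eq_getElem _ _ hm]
      exact hr
  have hmemn : ∀ n : ℕ, n < π.length → π.getD n dpart ∈ π := by
    intro n hn
    rw [List.getD_eq_getElem _ _ hn]
    exact List.getElem_mem hn
  have hposn : ∀ n : ℕ, n < π.length → 0 < psize π n := fun n hn => hpos _ (hmemn n hn)
  have hvaln : ∀ n : ℕ, pval π n = 2 * psize π n - (if pover π n then 1 else 0) :=
    fun n => rfl
  cases hov : pover π i with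
  | false =>
    have hd : η ∣ psize π i := hoverd _ (hmemn i hilen) hov
    obtain ⟨q, hq⟩ := hd
    have hv : pval π i = 2 * psize π i := by simp [hvaln i, hov]
    rw [hv] at hvge hvlt
    have h1 : η * t ≤ η * q := by
      calc η * t = t * η := mul_comm η t
        _ ≤ psize π i := by omega
        _ = η * q := hq
    have h2 : η * q < η * (t + 1) := by
      calc η * q = psize π i := hq.symm
        _ < (t + 1) * η := by omega
        _ = η * (t + 1) := mul_comm _ _
    have hq1 := Nat.le_of_mul_le_mul_left h1 hη
    have hq2 := Nat.lt_of_mul_lt_mul_left h2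
    have hqt : q = t := by omega
    have hfin : π.getD i dpart = ⟨t * η, false⟩ :=
      opart_eq' _ _ _ (by show psize π i = t * η; rw [hq, hqt]; exact mul_comm η t) hov
    exact hfin ▸ hmemn i hilen
  | true =>
    have hb2' := hb2 hov
    have hs0pos : 0 < psize π i := hposn i hilen
    have hv0 : pval π i = 2 * psize π i - 1 := by simp [hvaln i, hov]
    have hs0lb : t * η < psize π i := by omega
    have hs0ub : psize π i < (t + 1) * η := by omega
    have hbound : ∀ n, i ≤ n → n ≤ e →
        pval π n ≤ pval π i ∧ pval π i < pval π n + 2 * η := by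
      intro n hn1 hn2
      refine ⟨hmono i n hn1 (by omega), ?_⟩
      have := hmono n e hn2 helen
      omega
    by_cases hall : ∀ n, i ≤ n → n ≤ e → pover π n = true
    · exfalso
      have hkey : ∀ l, l < k - 1 → ∃ j, 1 ≤ j ∧ j ≤ lam ∧ psize π (i + l) % η = α j := by
        intro l hl
        have hn1 : i ≤ i + l := by omega
        have hn2 : i + l ≤ e := by omega
        have hnlen : i + l < π.length := by omega
        have hovn : pover π (i + l) = true := hall _ hn1 hn2
        have hposl : 0 < psize π (i + l) := hposn _ hnlen
        have hvn : pval π (i + l) = 2 * psize π (i + l) - 1 := by simp [hvaln (i + l), hovn]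
        obtain ⟨hle, hgt⟩ := hbound (i + l) hn1 hn2
        have hsub : psize π (i + l) ≤ psize π i := by omega
        have hnd : ¬ η ∣ psize π (i + l) := by
          intro hdvd
          have hgtt := hs _ (hmemn _ hnlen) hovn hdvd
          obtain ⟨q, hq⟩ := hdvd
          have h1 : η * t < η * q := by
            calc η * t = t * η := mul_comm η t
              _ < psize π (i + l) := hgtt
              _ = η * q := hq
          have h2 : η * q < η * (t + 1) := by
            calc η * q = psize π (i + l) := hq.symm
              _ ≤ psize π i := hsub
              _ < (t + 1) * η := hs0ub
              _ = η * (t + 1) := mul_comm _ _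
          have := Nat.lt_of_mul_lt_mul_left h1
          have := Nat.lt_of_mul_lt_mul_left h2
          omega
        rcases hcong _ (hmemn _ hnlen) with h0 | h1
        · exact absurd (Nat.dvd_iff_mod_eq_zero.mpr h0) hnd
        · exact h1
      let F : ℕ → ℕ := fun l =>
        if h : ∃ j, 1 ≤ j ∧ j ≤ lam ∧ psize π (i + l) % η = α j then h.choose else 0
      have hFspec : ∀ l, l < k - 1 →
          1 ≤ F l ∧ F l ≤ lam ∧ psize π (i + l) % η = α (F l) := by
        intro l hl
        have h := hkey l hl
        simp only [F, dif_pos h]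
        exact h.choose_spec
      have hmaps : ∀ l ∈ Finset.range (k - 1), F l ∈ Finset.Icc 1 lam := by
        intro l hl
        rw [Finset.mem_range] at hl
        rcases hFspec l hl with ⟨a1, a2, _⟩
        exact Finset.mem_Icc.mpr ⟨a1, a2⟩
      have hcard : (Finset.Icc 1 lam).card < (Finset.range (k - 1)).card := by
        rw [Nat.card_Icc, Finset.card_range]; omega
      obtain ⟨x, hx, y, hy, hxy, hFeq⟩ :=
        Finset.exists_ne_map_eq_of_card_lt_of_maps_to hcard hmaps
      rw [Finset.mem_range] at hx hy
      rcases hFspec x hx with ⟨_, _, hresx⟩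
      rcases hFspec y hy with ⟨_, _, hresy⟩
      have hres : psize π (i + x) % η = psize π (i + y) % η := by
        rw [hresx, hresy, hFeq]
      have hxlen : i + x < π.length := by omega
      have hylen : i + y < π.length := by omega
      have hovx : pover π (i + x) = true := hall _ (by omega) (by omega)
      have hovy : pover π (i + y) = true := hall _ (by omega) (by omega)
      have hpx : 0 < psize π (i + x) := hposn _ hxlen
      have hpy : 0 < psize π (i + y) := hposn _ hylen
      have hvx : pval π (i + x) = 2 * psize π (i + x) - 1 := by simp [hvaln (i + x), hovx]
      have hvy : pval π (i + y) = 2 * psize π (i + y) - 1 := by simp [hvaln (i + y), hovy]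
      obtain ⟨hlex, hgtx⟩ := hbound (i + x) (by omega) (by omega)
      obtain ⟨hley, hgty⟩ := hbound (i + y) (by omega) (by omega)
      have hsizeeq : psize π (i + x) = psize π (i + y) := by
        rcases le_total (psize π (i + x)) (psize π (i + y)) with hle | hle
        · have hdvd := (Nat.modEq_iff_dvd' hle).mp hres
          have hz : psize π (i + y) - psize π (i + x) = 0 := by
            by_contra hne
            have := Nat.le_of_dvd (Nat.pos_of_ne_zero hne) hdvd
            omega
          omega
        · have hdvd := (Nat.modEq_iff_dvd' hle).mp hres.symm
          have hz : psize π (i + x) - psize π (i + y) = 0 := by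
            by_contra hne
            have := Nat.le_of_dvd (Nat.pos_of_ne_zero hne) hdvd
            omega
          omega
      have hax : π.getD (i + x) dpart = ⟨psize π (i + x), true⟩ :=
        opart_eq' _ _ _ rfl hovx
      have hay : π.getD (i + y) dpart = ⟨psize π (i + x), true⟩ :=
        opart_eq' _ _ _ hsizeeq.symm hovy
      have hax' : π[i + x]'hxlen = ⟨psize π (i + x), true⟩ := by
        rw [← List.getD_eq_getElem π dpart hxlen]; exact hax
      have hay' : π[i + y]'hylen = ⟨psize π (i + x), true⟩ := by
        rw [← List.getD_eq_getElem π dpart hylen]; exact hay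
      have h2c : 2 ≤ π.count (⟨psize π (i + x), true⟩ : OPart) := by
        rcases hxy.lt_or_gt with h | h
        · exact two_le_count_of_two_indices' π (i + x) (i + y) (by omega) hylen _ hax' hay'
        · exact two_le_count_of_two_indices' π (i + y) (i + x) (by omega) hxlen _ hay' hax'
      have := hcount (psize π (i + x))
      omega
    · push_neg at hall
      obtain ⟨n, hn1, hn2, hovn⟩ := hall
      have hovn' : pover π n = false := by simpa using hovn
      have hnlen : n < π.length := by omega
      have hd : η ∣ psize π n := hoverd _ (hmemn n hnlen) hovn'
      have hvn : pval π n = 2 * psize π n := by simp [hvaln n, hovn']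
      obtain ⟨hle, hgt⟩ := hbound n hn1 hn2
      obtain ⟨q, hq⟩ := hd
      have h1 : η * t < η * (q + 1) := by
        calc η * t = t * η := mul_comm η t
          _ < psize π n + η := by omega
          _ = η * (q + 1) := by rw [hq]; ring
      have h2 : η * q < η * (t + 1) := by
        calc η * q = psize π n := hq.symm
          _ < (t + 1) * η := by omega
          _ = η * (t + 1) := mul_comm _ _
      have hq1 := Nat.lt_of_mul_lt_mul_left h1
      have hq2 := Nat.lt_of_mul_lt_mul_left h2
      have hqt : q = t := by omega
      have hfin : π.getD n dpart = ⟨t * η, false⟩ :=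
        opart_eq' _ _ _ (by show psize π n = t * η; rw [hq, hqt]; exact mul_comm η t) hovn'
      exact hfin ▸ hmemn n hnlen
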